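/- Let (X_t)_{t≥1} be a real-valued stochastic process with E[X_t] = 0 for all t, and suppose there exist C < ∞ and 0 < λ < 1 such that |E[X_{t−s} X_t]| ≤ C·λ^s for all t ≥ 1 and all 0 ≤ s < t (in particular E[X_t²] ≤ C). Then (1/T) Σ_{t=1}^T X_t → 0 almost surely as T → ∞. -/

import Mathlib

open MeasureTheory Filter

lemma aux_integrable_mul {Ω : Type*} [MeasurableSpace Ω] {μ : Measure Ω}
    {f g : Ω → ℝ} (hf : MemLp f 2 μ) (hg : MemLp g 2 μ) :
    Integrable (fun ω => f ω * g ω) μ := by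
  have : MemLp (f • g) 1 μ := hg.smul hf
  exact memLp_one_iff_integrable.mp this

lemma aux_geom_sum {lam : ℝ} (h0 : 0 ≤ lam) (h1 : lam < 1) (n : ℕ) :
    ∑ j ∈ Finset.range n, lam ^ j ≤ (1 - lam)⁻¹ := by
  have hs : Summable fun j : ℕ => lam ^ j := summable_geometric_of_lt_one h0 h1
  calc ∑ j ∈ Finset.range n, lam ^ j ≤ ∑' j : ℕ, lam ^ j :=
        Summable.sum_le_tsum _ (fun i _ => pow_nonneg h0 i) hs
    _ = (1 - lam)⁻¹ := tsum_geometric_of_lt_one h0 h1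

lemma aux_inner_geom {lam : ℝ} (h0 : 0 ≤ lam) (h1 : lam < 1) (a m T : ℕ) :
    ∑ b ∈ Finset.Ico m T, lam ^ (a - b) * lam ^ (b - a) ≤ 2 * (1 - lam)⁻¹ := by
  set M := max T (a + 1) with hM
  have hsub : Finset.Ico m T ⊆ Finset.range M := by
    intro b hb
    simp only [Finset.mem_Ico] at hb
    exact Finset.mem_range.2 (lt_of_lt_of_le hb.2 (le_max_left _ _))
  have hnn : ∀ b : ℕ, 0 ≤ lam ^ (a - b) * lam ^ (b - a) := fun b =>
    mul_nonneg (pow_nonneg h0 _) (pow_nonneg h0 _)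
  have step1 : ∑ b ∈ Finset.Ico m T, lam ^ (a - b) * lam ^ (b - a)
      ≤ ∑ b ∈ Finset.range M, lam ^ (a - b) * lam ^ (b - a) :=
    Finset.sum_le_sum_of_subset_of_nonneg hsub (fun b _ _ => hnn b)
  have hsplit : ∑ b ∈ Finset.range M, lam ^ (a - b) * lam ^ (b - a)
      = (∑ b ∈ Finset.range (a + 1), lam ^ (a - b) * lam ^ (b - a))
        + ∑ b ∈ Finset.Ico (a + 1) M, lam ^ (a - b) * lam ^ (b - a) := by
    rw [Finset.range_eq_Ico]
    rw [← Finset.sum_Ico_consecutive _ (Nat.zero_le (a + 1)) (le_max_right T (a + 1))]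
    rw [Finset.range_eq_Ico]
  have hfirst : ∑ b ∈ Finset.range (a + 1), lam ^ (a - b) * lam ^ (b - a) ≤ (1 - lam)⁻¹ := by
    have : ∀ b ∈ Finset.range (a + 1), lam ^ (a - b) * lam ^ (b - a) = lam ^ (a - b) := by
      intro b hb
      have : b - a = 0 := Nat.sub_eq_zero_of_le (Nat.lt_succ_iff.1 (Finset.mem_range.1 hb))
      rw [this, pow_zero, mul_one]
    rw [Finset.sum_congr rfl this]
    have hre := Finset.sum_range_reflect (fun j => lam ^ j) (a + 1)
    simp only [Nat.add_sub_cancel] at hre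
    calc ∑ b ∈ Finset.range (a + 1), lam ^ (a - b)
        = ∑ j ∈ Finset.range (a + 1), lam ^ j := by
          rw [← hre]
      _ ≤ (1 - lam)⁻¹ := aux_geom_sum h0 h1 _
  have hsecond : ∑ b ∈ Finset.Ico (a + 1) M, lam ^ (a - b) * lam ^ (b - a) ≤ (1 - lam)⁻¹ := by
    have heq : ∀ b ∈ Finset.Ico (a + 1) M, lam ^ (a - b) * lam ^ (b - a) = lam ^ (b - a) := by
      intro b hb
      have hab : a < b := (Finset.mem_Ico.1 hb).1
      have : a - b = 0 := Nat.sub_eq_zero_of_le hab.le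
      rw [this, pow_zero, one_mul]
    rw [Finset.sum_congr rfl heq, Finset.sum_Ico_eq_sum_range]
    calc ∑ i ∈ Finset.range (M - (a + 1)), lam ^ (a + 1 + i - a)
        ≤ ∑ i ∈ Finset.range (M - (a + 1)), lam ^ i := by
          apply Finset.sum_le_sum
          intro i _
          have : a + 1 + i - a = i + 1 := by omega
          rw [this]
          exact pow_le_pow_of_le_one h0 h1.le (Nat.le_succ i)
      _ ≤ (1 - lam)⁻¹ := aux_geom_sum h0 h1 _
  calc ∑ b ∈ Finset.Ico m T, lam ^ (a - b) * lam ^ (b - a)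
      ≤ _ := step1
    _ = _ := hsplit
    _ ≤ (1 - lam)⁻¹ + (1 - lam)⁻¹ := add_le_add hfirst hsecond
    _ = 2 * (1 - lam)⁻¹ := by ring

lemma aux_cov_bound {Ω : Type*} [MeasurableSpace Ω] {μ : Measure Ω}
    {X : ℕ → Ω → ℝ} {C lam : ℝ}
    (hcov : ∀ t s : ℕ, s ≤ t → |∫ ω, X (t - s) ω * X t ω ∂μ| ≤ C * lam ^ s)
    (a b : ℕ) : |∫ ω, X a ω * X b ω ∂μ| ≤ C * (lam ^ (a - b) * lam ^ (b - a)) := by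
  rcases le_total a b with h | h
  · have hb := hcov b (b - a) (Nat.sub_le _ _)
    rw [Nat.sub_sub_self h] at hb
    have ha : a - b = 0 := Nat.sub_eq_zero_of_le h
    rw [ha, pow_zero, one_mul]; exact hb
  · have hb := hcov a (a - b) (Nat.sub_le _ _)
    rw [Nat.sub_sub_self h] at hb
    have hz : b - a = 0 := Nat.sub_eq_zero_of_le h
    rw [hz, pow_zero, mul_one]
    calc |∫ ω, X a ω * X b ω ∂μ| = |∫ ω, X b ω * X a ω ∂μ| := by
          congr 1
          exact integral_congr_ae (Filter.Eventually.of_forall fun ω => mul_comm _ _)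
      _ ≤ C * lam ^ (a - b) := hb

lemma aux_var_bound {Ω : Type*} [MeasurableSpace Ω] {μ : Measure Ω}
    {X : ℕ → Ω → ℝ} (hX : ∀ t, MemLp (X t) 2 μ) {C lam : ℝ}
    (hC : 0 ≤ C) (hlam0 : 0 < lam) (hlam1 : lam < 1)
    (hcov : ∀ t s : ℕ, s ≤ t → |∫ ω, X (t - s) ω * X t ω ∂μ| ≤ C * lam ^ s)
    (m T : ℕ) :
    ∫ ω, (∑ t ∈ Finset.Ico m T, X t ω) ^ 2 ∂μ
      ≤ (2 * C * (1 - lam)⁻¹) * (Finset.Ico m T).card := by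
  have hint : ∀ a b : ℕ, Integrable (fun ω => X a ω * X b ω) μ :=
    fun a b => aux_integrable_mul (hX a) (hX b)
  have hexp : (fun ω => (∑ t ∈ Finset.Ico m T, X t ω) ^ 2)
      = fun ω => ∑ a ∈ Finset.Ico m T, ∑ b ∈ Finset.Ico m T, X a ω * X b ω := by
    funext ω
    rw [sq, Finset.sum_mul_sum]
  rw [hexp, integral_finset_sum _ (fun a _ => integrable_finset_sum _ (fun b _ => hint a b))]
  have h2 : ∀ a ∈ Finset.Ico m T,
      ∫ ω, ∑ b ∈ Finset.Ico m T, X a ω * X b ω ∂μ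
        = ∑ b ∈ Finset.Ico m T, ∫ ω, X a ω * X b ω ∂μ :=
    fun a _ => integral_finset_sum _ (fun b _ => hint a b)
  rw [Finset.sum_congr rfl h2]
  calc ∑ a ∈ Finset.Ico m T, ∑ b ∈ Finset.Ico m T, ∫ ω, X a ω * X b ω ∂μ
      ≤ ∑ a ∈ Finset.Ico m T, ∑ b ∈ Finset.Ico m T, C * (lam ^ (a - b) * lam ^ (b - a)) := by
        apply Finset.sum_le_sum; intro a _
        apply Finset.sum_le_sum; intro b _
        exact (le_abs_self _).trans (aux_cov_bound hcov a b)
    _ = ∑ a ∈ Finset.Ico m T, C * ∑ b ∈ Finset.Ico m T, lam ^ (a - b) * lam ^ (b - a) := by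
        simp [Finset.mul_sum]
    _ ≤ ∑ a ∈ Finset.Ico m T, C * (2 * (1 - lam)⁻¹) := by
        apply Finset.sum_le_sum; intro a _
        exact mul_le_mul_of_nonneg_left (aux_inner_geom hlam0.le hlam1 a m T) hC
    _ = (2 * C * (1 - lam)⁻¹) * (Finset.Ico m T).card := by
        rw [Finset.sum_const, nsmul_eq_mul]; ring

lemma aux_ae_summable {Ω : Type*} [MeasurableSpace Ω] {μ : Measure Ω}
    {F : ℕ → Ω → ℝ} (hnn : ∀ n ω, 0 ≤ F n ω) (hint : ∀ n, Integrable (F n) μ)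
    {c : ℕ → ℝ} (hc : ∀ n, ∫ ω, F n ω ∂μ ≤ c n) (hcs : Summable c) :
    ∀ᵐ ω ∂μ, Summable fun n => F n ω := by
  have hmeas : ∀ n, AEMeasurable (fun ω => ENNReal.ofReal (F n ω)) μ :=
    fun n => (hint n).aemeasurable.ennreal_ofReal
  have hlint : ∀ n, ∫⁻ ω, ENNReal.ofReal (F n ω) ∂μ = ENNReal.ofReal (∫ ω, F n ω ∂μ) :=
    fun n => (ofReal_integral_eq_lintegral_ofReal (hint n)
      (Filter.Eventually.of_forall (hnn n))).symm
  have hkey : ∫⁻ ω, ∑' n, ENNReal.ofReal (F n ω) ∂μ < ⊤ := by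
    rw [lintegral_tsum hmeas]
    calc ∑' n, ∫⁻ ω, ENNReal.ofReal (F n ω) ∂μ
        = ∑' n, ENNReal.ofReal (∫ ω, F n ω ∂μ) := by simp [hlint]
      _ ≤ ∑' n, ENNReal.ofReal (c n) :=
          ENNReal.tsum_le_tsum fun n => ENNReal.ofReal_le_ofReal (hc n)
      _ = ENNReal.ofReal (∑' n, c n) :=
          (ENNReal.ofReal_tsum_of_nonneg
            (fun n => le_trans (integral_nonneg (hnn n)) (hc n)) hcs).symm
      _ < ⊤ := ENNReal.ofReal_lt_top
  filter_upwards [ae_lt_top' (AEMeasurable.ennreal_tsum hmeas) hkey.ne] with ω hω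
  have hsum := ENNReal.summable_toReal hω.ne
  refine hsum.congr fun n => ?_
  simp [ENNReal.toReal_ofReal (hnn n ω)]

/-- Strong law of large numbers for a centered, square-integrable real-valued process whose
correlations decay exponentially: if `E[X_t] = 0` and `|E[X_{t-s} X_t]| ≤ C·λ^s`, then
`(1/T) ∑_{t=1}^T X_t → 0` almost surely. -/
theorem lln_of_exponential_correlation_decay
    {Ω : Type*} [MeasurableSpace Ω] (μ : Measure Ω) [IsProbabilityMeasure μ]
    (X : ℕ → Ω → ℝ) (hX : ∀ t, MemLp (X t) 2 μ)
    (hmean : ∀ t, ∫ ω, X t ω ∂μ = 0)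
    (C lam : ℝ) (hlam0 : 0 < lam) (hlam1 : lam < 1)
    (hcov : ∀ t s : ℕ, s ≤ t → |∫ ω, X (t - s) ω * X t ω ∂μ| ≤ C * lam ^ s) :
    ∀ᵐ ω ∂μ, Tendsto (fun T : ℕ => (T : ℝ)⁻¹ * ∑ t ∈ Finset.range T, X t ω)
      atTop (nhds 0) := by
  -- notation
  set S : ℕ → Ω → ℝ := fun T ω => ∑ t ∈ Finset.range T, X t ω with hSdef
  have hC : 0 ≤ C := by
    have h0 := hcov 0 0 (le_refl 0)
    have h1 : (0:ℝ) ≤ ∫ ω, X 0 ω * X 0 ω ∂μ :=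
      integral_nonneg fun ω => mul_self_nonneg _
    simp only [pow_zero, mul_one] at h0
    calc (0:ℝ) ≤ |∫ ω, X 0 ω * X 0 ω ∂μ| := abs_nonneg _
      _ ≤ C := h0
  set K : ℝ := 2 * C * (1 - lam)⁻¹ with hKdef
  have hKnn : 0 ≤ K := by
    have : (0:ℝ) ≤ (1 - lam)⁻¹ := inv_nonneg.2 (by linarith)
    positivity
  -- S is in L2 and variance bounds
  have hSL2 : ∀ T, MemLp (S T) 2 μ := by
    intro T
    have h := memLp_finset_sum' (Finset.range T) (fun t _ => hX t)
    have heq : (∑ t ∈ Finset.range T, X t) = S T := by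
      funext ω; simp [hSdef]
    rwa [heq] at h
  have hdiff : ∀ m T : ℕ, m ≤ T → ∀ ω, S T ω - S m ω = ∑ t ∈ Finset.Ico m T, X t ω := by
    intro m T h ω
    rw [Finset.sum_Ico_eq_sub _ h]
  have hvar : ∀ m T : ℕ, m ≤ T →
      ∫ ω, (S T ω - S m ω) ^ 2 ∂μ ≤ K * (T - m : ℕ) := by
    intro m T h
    have := aux_var_bound hX hC hlam0 hlam1 hcov m T
    rw [Nat.card_Ico] at this
    calc ∫ ω, (S T ω - S m ω) ^ 2 ∂μ
        = ∫ ω, (∑ t ∈ Finset.Ico m T, X t ω) ^ 2 ∂μ := by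
          apply integral_congr_ae
          refine Filter.Eventually.of_forall fun ω => ?_
          show (S T ω - S m ω) ^ 2 = (∑ t ∈ Finset.Ico m T, X t ω) ^ 2
          rw [hdiff m T h ω]
      _ ≤ K * (T - m : ℕ) := this
  -- the two auxiliary sequences
  set q : ℕ → ℝ := fun n => ((n : ℝ) ^ 2)⁻¹ with hqdef
  have hqnn : ∀ n, 0 ≤ q n := fun n => inv_nonneg.2 (sq_nonneg _)
  set f : ℕ → Ω → ℝ := fun n ω => (q n * S (n ^ 2) ω) ^ 2 with hfdef
  set g : ℕ → Ω → ℝ := fun n ω =>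
    q n ^ 2 * ∑ U ∈ Finset.Icc (n ^ 2) ((n + 1) ^ 2), (S U ω - S (n ^ 2) ω) ^ 2 with hgdef
  -- integrability
  have hfint : ∀ n, Integrable (f n) μ := by
    intro n
    have : MemLp (fun ω => q n * S (n ^ 2) ω) 2 μ := (hSL2 (n ^ 2)).const_mul _
    exact this.integrable_sq
  have hgint : ∀ n, Integrable (g n) μ := by
    intro n
    apply Integrable.const_mul
    exact integrable_finset_sum _ fun U _ => ((hSL2 U).sub (hSL2 (n ^ 2))).integrable_sq
  -- integral bounds
  have hS0var : ∀ T : ℕ, ∫ ω, S T ω ^ 2 ∂μ ≤ K * T := by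
    intro T
    have := hvar 0 T (Nat.zero_le T)
    simpa [hSdef] using this
  have hfbound : ∀ n, ∫ ω, f n ω ∂μ ≤ K * q n := by
    intro n
    rcases Nat.eq_zero_or_pos n with h | h
    · subst h
      simp [hfdef, hqdef]
    · have hn0 : ((n:ℝ) ^ 2) ≠ 0 := by positivity
      have h1 : ∫ ω, f n ω ∂μ = q n ^ 2 * ∫ ω, S (n ^ 2) ω ^ 2 ∂μ := by
        simp only [hfdef, mul_pow]
        rw [integral_const_mul]
      rw [h1]
      have h2 : ∫ ω, S (n ^ 2) ω ^ 2 ∂μ ≤ K * (n ^ 2 : ℕ) := hS0var (n ^ 2)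
      calc q n ^ 2 * ∫ ω, S (n ^ 2) ω ^ 2 ∂μ
          ≤ q n ^ 2 * (K * (n ^ 2 : ℕ)) :=
            mul_le_mul_of_nonneg_left h2 (sq_nonneg _)
        _ = K * q n := by
            push_cast
            field_simp [hqdef]
            simp only [hqdef]
            field_simp
  have hgbound : ∀ n, ∫ ω, g n ω ∂μ ≤ 12 * K * q n := by
    intro n
    rcases Nat.eq_zero_or_pos n with h | h
    · subst h
      simp [hgdef, hqdef]
    · have hn1 : (1:ℝ) ≤ (n:ℝ) := by exact_mod_cast h
      have hint2 : ∀ U : ℕ, Integrable (fun ω => (S U ω - S (n ^ 2) ω) ^ 2) μ :=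
        fun U => ((hSL2 U).sub (hSL2 (n ^ 2))).integrable_sq
      have hsum_int : ∫ ω, ∑ U ∈ Finset.Icc (n ^ 2) ((n + 1) ^ 2),
            (S U ω - S (n ^ 2) ω) ^ 2 ∂μ
          = ∑ U ∈ Finset.Icc (n ^ 2) ((n + 1) ^ 2), ∫ ω, (S U ω - S (n ^ 2) ω) ^ 2 ∂μ :=
        integral_finset_sum _ (fun U _ => hint2 U)
      have h1 : ∫ ω, g n ω ∂μ
          = q n ^ 2 * ∑ U ∈ Finset.Icc (n ^ 2) ((n + 1) ^ 2),
              ∫ ω, (S U ω - S (n ^ 2) ω) ^ 2 ∂μ := by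
        simp only [hgdef]
        rw [integral_const_mul, hsum_int]
      rw [h1]
      have h2 : ∀ U ∈ Finset.Icc (n ^ 2) ((n + 1) ^ 2),
          ∫ ω, (S U ω - S (n ^ 2) ω) ^ 2 ∂μ ≤ K * (2 * n + 1) := by
        intro U hU
        rw [Finset.mem_Icc] at hU
        have hle : ∫ ω, (S U ω - S (n ^ 2) ω) ^ 2 ∂μ ≤ K * ((U - n ^ 2 : ℕ) : ℝ) :=
          hvar (n ^ 2) U hU.1
        refine hle.trans (mul_le_mul_of_nonneg_left ?_ hKnn)
        have : (U - n ^ 2 : ℕ) ≤ 2 * n + 1 := by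
          have h3 : (n + 1) ^ 2 = n ^ 2 + 2 * n + 1 := by ring
          omega
        exact_mod_cast this
      have h3 : ∑ U ∈ Finset.Icc (n ^ 2) ((n + 1) ^ 2),
          ∫ ω, (S U ω - S (n ^ 2) ω) ^ 2 ∂μ
            ≤ (Finset.Icc (n ^ 2) ((n + 1) ^ 2)).card * (K * (2 * n + 1)) := by
        have h3' := Finset.sum_le_card_nsmul _ _ _ h2
        rwa [nsmul_eq_mul] at h3'
      have hcard : (Finset.Icc (n ^ 2) ((n + 1) ^ 2)).card = 2 * n + 2 := by
        rw [Nat.card_Icc]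
        have h4 : (n + 1) ^ 2 = n ^ 2 + 2 * n + 1 := by ring
        omega
      rw [hcard] at h3
      calc q n ^ 2 * ∑ U ∈ Finset.Icc (n ^ 2) ((n + 1) ^ 2),
            ∫ ω, (S U ω - S (n ^ 2) ω) ^ 2 ∂μ
          ≤ q n ^ 2 * ((2 * n + 2 : ℕ) * (K * (2 * n + 1))) := by
            apply mul_le_mul_of_nonneg_left _ (sq_nonneg _)
            exact_mod_cast h3
        _ ≤ 12 * K * q n := by
            have hq : q n = ((n:ℝ) ^ 2)⁻¹ := rfl
            have hn0 : ((n:ℝ) ^ 2) ≠ 0 := by positivity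
            have hfact : ((2 * n + 2 : ℕ) : ℝ) * (2 * (n:ℝ) + 1) ≤ 12 * (n:ℝ) ^ 2 := by
              push_cast
              nlinarith
            calc q n ^ 2 * ((2 * n + 2 : ℕ) * (K * (2 * n + 1)))
                = q n ^ 2 * K * (((2 * n + 2 : ℕ) : ℝ) * (2 * (n:ℝ) + 1)) := by
                  push_cast; ring
              _ ≤ q n ^ 2 * K * (12 * (n:ℝ) ^ 2) := by
                  apply mul_le_mul_of_nonneg_left hfact
                  exact mul_nonneg (sq_nonneg _) hKnn
              _ = 12 * K * q n := by
                  rw [hq]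
                  field_simp
  -- summable bounding sequence
  have hqsum : Summable fun n : ℕ => ((n : ℝ) ^ 2)⁻¹ := by
    have := Real.summable_one_div_nat_pow.mpr (by norm_num : 1 < 2)
    simpa [one_div] using this
  have hc1 : Summable fun n => K * q n := hqsum.mul_left K
  have hc2 : Summable fun n => 12 * K * q n := hqsum.mul_left (12 * K)
  have hf_ae : ∀ᵐ ω ∂μ, Summable fun n => f n ω :=
    aux_ae_summable (fun n ω => sq_nonneg _) hfint hfbound hc1
  have hg_ae : ∀ᵐ ω ∂μ, Summable fun n => g n ω := by
    refine aux_ae_summable (fun n ω => ?_) hgint hgbound hc2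
    exact mul_nonneg (sq_nonneg _) (Finset.sum_nonneg fun U _ => sq_nonneg _)
  -- sqrt of Nat facts
  have hsqrt_tendsto : Tendsto Nat.sqrt atTop atTop := by
    apply tendsto_atTop_atTop.2
    intro N
    exact ⟨N * N, fun T hT => Nat.le_sqrt.2 (le_trans (le_refl _) hT)⟩
  -- main a.e. argument
  filter_upwards [hf_ae, hg_ae] with ω hfs hgs
  have hf0 : Tendsto (fun n => f n ω) atTop (nhds 0) := hfs.tendsto_atTop_zero
  have hg0 : Tendsto (fun n => g n ω) atTop (nhds 0) := hgs.tendsto_atTop_zero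
  have hb0 : Tendsto (fun n => Real.sqrt (f n ω) + Real.sqrt (g n ω)) atTop (nhds 0) := by
    have h1 : Tendsto (fun n => Real.sqrt (f n ω)) atTop (nhds 0) := by
      have := hf0.sqrt
      simpa [Real.sqrt_zero] using this
    have h2 : Tendsto (fun n => Real.sqrt (g n ω)) atTop (nhds 0) := by
      have := hg0.sqrt
      simpa [Real.sqrt_zero] using this
    simpa using h1.add h2
  have hcomp : Tendsto (fun T => Real.sqrt (f (Nat.sqrt T) ω) + Real.sqrt (g (Nat.sqrt T) ω))
      atTop (nhds 0) := hb0.comp hsqrt_tendsto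
  apply squeeze_zero_norm' _ hcomp
  filter_upwards [eventually_ge_atTop 1] with T hT
  set n := Nat.sqrt T with hn
  have hnpos : 0 < n := Nat.sqrt_pos.2 hT
  have hn2T : n ^ 2 ≤ T := Nat.sqrt_le' T
  have hTlt : T < (n + 1) ^ 2 := Nat.lt_succ_sqrt' T
  have hTmem : T ∈ Finset.Icc (n ^ 2) ((n + 1) ^ 2) := Finset.mem_Icc.2 ⟨hn2T, hTlt.le⟩
  have hn2pos : (0:ℝ) < (n:ℝ) ^ 2 := by positivity
  have hTpos : (0:ℝ) < (T:ℝ) := by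
    have h0T : 0 < T := hT
    exact_mod_cast h0T
  -- step 1 : ‖T⁻¹ S T‖ ≤ q n * |S T|
  have step1 : ‖(T : ℝ)⁻¹ * S T ω‖ ≤ q n * |S T ω| := by
    rw [norm_mul, Real.norm_eq_abs, Real.norm_eq_abs, abs_of_nonneg (inv_nonneg.2 hTpos.le)]
    apply mul_le_mul_of_nonneg_right _ (abs_nonneg _)
    apply inv_anti₀ hn2pos
    exact_mod_cast hn2T
  -- step 2 : triangle inequality
  have step2 : q n * |S T ω| ≤ q n * |S (n ^ 2) ω| + q n * |S T ω - S (n ^ 2) ω| := by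
    have : |S T ω| ≤ |S (n ^ 2) ω| + |S T ω - S (n ^ 2) ω| := by
      have := abs_add_le (S (n ^ 2) ω) (S T ω - S (n ^ 2) ω)
      simpa using this
    calc q n * |S T ω| ≤ q n * (|S (n ^ 2) ω| + |S T ω - S (n ^ 2) ω|) :=
          mul_le_mul_of_nonneg_left this (hqnn n)
      _ = _ := by ring
  -- step 3 : each term bounded by sqrt's
  have step3a : q n * |S (n ^ 2) ω| = Real.sqrt (f n ω) := by
    rw [hfdef]
    rw [Real.sqrt_sq_eq_abs, abs_mul, abs_of_nonneg (hqnn n)]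
  have step3b : q n * |S T ω - S (n ^ 2) ω| ≤ Real.sqrt (g n ω) := by
    have h1 : (q n * |S T ω - S (n ^ 2) ω|) ^ 2 ≤ g n ω := by
      rw [mul_pow, sq_abs]
      apply mul_le_mul_of_nonneg_left _ (sq_nonneg (q n))
      exact Finset.single_le_sum (fun U _ => sq_nonneg (S U ω - S (n ^ 2) ω)) hTmem
    have h2 : 0 ≤ q n * |S T ω - S (n ^ 2) ω| :=
      mul_nonneg (hqnn n) (abs_nonneg _)
    calc q n * |S T ω - S (n ^ 2) ω|
        = Real.sqrt ((q n * |S T ω - S (n ^ 2) ω|) ^ 2) := (Real.sqrt_sq h2).symm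
      _ ≤ Real.sqrt (g n ω) := Real.sqrt_le_sqrt h1
  calc ‖(T : ℝ)⁻¹ * S T ω‖ ≤ q n * |S T ω| := step1
    _ ≤ q n * |S (n ^ 2) ω| + q n * |S T ω - S (n ^ 2) ω| := step2
    _ ≤ Real.sqrt (f n ω) + Real.sqrt (g n ω) := by
        rw [step3a]
        exact add_le_add_right step3b _
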